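/- Let ψ : [1,∞) → (0,∞) be continuous and satisfy the lower weak scaling condition at infinity with constant a̲ > 0 and exponent δ̲_ψ ∈ (0,1), such that r ↦ r² ψ(r^{-2}) is nondecreasing on (0,1], and let V : (0,1] → (0,1] be nondecreasing and satisfy the lower weak scaling condition at zero with constant ã₁ > 0 and exponent δ̲_V > 0. Define ρ(t) := V(t)² ψ(V(t)^{-2}) + V(t) ∫_{V(t)}^1 ψ(s^{-2}) ds and, for δ ∈ (0,1], H(δ) := ( δ V(δ) ψ(V(δ)^{-2}) )^{-1} ∫_0^δ ρ(t) V(t) dt + V(δ) ( 1 + ∫_δ^1 ρ(t) / ( t V(t) ψ(V(t)^{-2}) ) dt ). Then there exists C ≥ 1 such that C⁻¹ V(δ) ≤ H(δ) ≤ C V(δ) for all δ ∈ (0,1]. -/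

import Mathlib

open Real MeasureTheory

/-- The weight `ρ(t) = V(t)² ψ(V(t)⁻²) + V(t) ∫_{V(t)}^1 ψ(s⁻²) ds` describing the boundary
decay of `ψ(-L_{|D}) ξ` for test functions `ξ`. -/
noncomputable def rhoWeight (ψ V : ℝ → ℝ) (t : ℝ) : ℝ :=
  V t ^ 2 * ψ (1 / V t ^ 2) + V t * ∫ s in Set.Ioc (V t) 1, ψ (1 / s ^ 2)

/-- The sharp two-sided bound `H(δ)` for the Green potential `G^ψ_D(ρ(δ_D))` at a point with
`δ_D(x) = δ`. -/
noncomputable def greenBound (ψ V : ℝ → ℝ) (δ : ℝ) : ℝ :=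
  (δ * V δ * ψ (1 / V δ ^ 2))⁻¹ * (∫ t in Set.Ioc (0 : ℝ) δ, rhoWeight ψ V t * V t) +
    V δ * (1 + ∫ t in Set.Ioc δ 1, rhoWeight ψ V t / (t * V t * ψ (1 / V t ^ 2)))

/-- One-dimensional core of the estimate `G^ψ_D(ρ(δ_D)) ≍ V(δ_D)`: the bound `H(δ)` is
comparable to `V(δ)` on `(0,1]`. -/
theorem stmt_11 (ψ V : ℝ → ℝ) (a δψ a₁ δV : ℝ)
    (ha : 0 < a) (hδψ : 0 < δψ) (hδψ1 : δψ < 1) (ha₁ : 0 < a₁) (hδV : 0 < δV)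
    (hψcont : ContinuousOn ψ (Set.Ici 1)) (hψpos : ∀ t : ℝ, 1 ≤ t → 0 < ψ t)
    (hψscale : ∀ lam t : ℝ, 1 ≤ lam → 1 ≤ t → a * lam ^ δψ * ψ t ≤ ψ (lam * t))
    (hgmono : MonotoneOn (fun r : ℝ => r ^ 2 * ψ (1 / r ^ 2)) (Set.Ioc 0 1))
    (hVrange : ∀ t : ℝ, 0 < t → t ≤ 1 → 0 < V t ∧ V t ≤ 1)
    (hVmono : ∀ s t : ℝ, 0 < s → s ≤ t → t ≤ 1 → V s ≤ V t)
    (hVscale : ∀ s t : ℝ, 0 < s → s ≤ t → t ≤ 1 → a₁ * (t / s) ^ δV ≤ V t / V s) :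
    ∃ C : ℝ, 1 ≤ C ∧ ∀ δ : ℝ, 0 < δ → δ ≤ 1 →
      C⁻¹ * V δ ≤ greenBound ψ V δ ∧ greenBound ψ V δ ≤ C * V δ := by
  set K : ℝ := 1 + a⁻¹ * (1 - δψ)⁻¹ with hKdef
  set cK : ℝ := (a₁ ^ δψ)⁻¹ with hcKdef
  set e : ℝ := δV * δψ with hedef
  have h1δ : (0:ℝ) < 1 - δψ := by linarith
  have hK : 0 < K := by positivity
  have hcK : 0 < cK := by positivity
  have he : 0 < e := by positivity
  set C : ℝ := 1 + K * cK * (1 + e⁻¹) with hCdef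
  have hC1 : 1 ≤ C := by
    have h : 0 < K * cK * (1 + e⁻¹) := by positivity
    rw [hCdef]; linarith
  -- basic facts about `1/W^2` for `0 < W ≤ 1`
  have hone : ∀ W : ℝ, 0 < W → W ≤ 1 → 1 ≤ 1 / W ^ 2 := by
    intro W h0 h1
    rw [le_div_iff₀ (by positivity), one_mul]
    nlinarith
  -- pointwise scaling bound on ψ
  have psi_pt : ∀ W s : ℝ, 0 < W → W ≤ 1 → s ∈ Set.Ioc W 1 →
      ψ (1 / s ^ 2) ≤ (a⁻¹ * W ^ δψ * ψ (1 / W ^ 2)) * s ^ (-δψ) := by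
    intro W s hW0 hW1 hs
    obtain ⟨hWs, hs1⟩ := hs
    have hs0 : 0 < s := lt_trans hW0 hWs
    have hlam : (1:ℝ) ≤ s ^ 2 / W ^ 2 := by
      rw [le_div_iff₀ (by positivity)]
      nlinarith
    have ht1 : (1:ℝ) ≤ 1 / s ^ 2 := hone s hs0 hs1
    have hkey := hψscale (s ^ 2 / W ^ 2) (1 / s ^ 2) hlam ht1
    have heq : s ^ 2 / W ^ 2 * (1 / s ^ 2) = 1 / W ^ 2 := by
      field_simp
    rw [heq] at hkey
    have hbase : (1:ℝ) ≤ s / W := (one_le_div hW0).2 hWs.le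
    have hmono : (s / W) ^ δψ ≤ (s ^ 2 / W ^ 2) ^ δψ := by
      apply Real.rpow_le_rpow (by positivity) _ hδψ.le
      rw [div_le_div_iff₀ (by positivity) (by positivity)]
      nlinarith [mul_lt_mul_of_pos_left hWs (mul_pos hs0 hW0)]
    have hψs : 0 < ψ (1 / s ^ 2) := hψpos _ ht1
    have h2 : a * (s / W) ^ δψ * ψ (1 / s ^ 2) ≤ ψ (1 / W ^ 2) := by
      calc a * (s / W) ^ δψ * ψ (1 / s ^ 2)
          ≤ a * (s ^ 2 / W ^ 2) ^ δψ * ψ (1 / s ^ 2) := by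
            apply mul_le_mul_of_nonneg_right _ hψs.le
            exact mul_le_mul_of_nonneg_left hmono ha.le
        _ ≤ ψ (1 / W ^ 2) := hkey
    have hpos : 0 < a * (s / W) ^ δψ := by positivity
    rw [← le_div_iff₀' hpos] at h2
    calc ψ (1 / s ^ 2) ≤ ψ (1 / W ^ 2) / (a * (s / W) ^ δψ) := h2
      _ = (a⁻¹ * W ^ δψ * ψ (1 / W ^ 2)) * s ^ (-δψ) := by
          rw [Real.div_rpow hs0.le hW0.le, Real.rpow_neg hs0.le]
          have hsne : s ^ δψ ≠ 0 := by positivity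
          have hWne : W ^ δψ ≠ 0 := by positivity
          field_simp
  -- bound on the inner integral
  have inner_bound : ∀ W : ℝ, 0 < W → W ≤ 1 →
      (∫ s in Set.Ioc W 1, ψ (1 / s ^ 2)) ≤
        a⁻¹ * (1 - δψ)⁻¹ * W ^ δψ * ψ (1 / W ^ 2) := by
    intro W hW0 hW1
    have hψW : 0 < ψ (1 / W ^ 2) := hψpos _ (hone W hW0 hW1)
    set c0 : ℝ := a⁻¹ * W ^ δψ * ψ (1 / W ^ 2) with hc0def
    have hc0 : 0 ≤ c0 := by positivity
    have hint1 : IntegrableOn (fun s : ℝ => c0 * s ^ (-δψ)) (Set.Ioc 0 1) :=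
      ((intervalIntegral.intervalIntegrable_rpow' (by linarith)).1).const_mul c0
    have hint2 : IntegrableOn (fun s : ℝ => c0 * s ^ (-δψ)) (Set.Ioc W 1) :=
      hint1.mono_set (Set.Ioc_subset_Ioc_left hW0.le)
    have step1 : (∫ s in Set.Ioc W 1, ψ (1 / s ^ 2)) ≤
        ∫ s in Set.Ioc W 1, c0 * s ^ (-δψ) := by
      apply integral_mono_of_nonneg _ hint2
      · filter_upwards [ae_restrict_mem measurableSet_Ioc] with s hs
        exact psi_pt W s hW0 hW1 hs
      · filter_upwards [ae_restrict_mem measurableSet_Ioc] with s hs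
        exact (hψpos _ (hone s (lt_trans hW0 hs.1) hs.2)).le
    have step2 : (∫ s in Set.Ioc W 1, c0 * s ^ (-δψ)) ≤
        ∫ s in Set.Ioc (0:ℝ) 1, c0 * s ^ (-δψ) := by
      apply setIntegral_mono_set hint1 _
        ((Set.Ioc_subset_Ioc_left hW0.le).eventuallyLE)
      filter_upwards [ae_restrict_mem measurableSet_Ioc] with s hs
      have : 0 ≤ s ^ (-δψ) := Real.rpow_nonneg hs.1.le _
      positivity
    have step3 : (∫ s in Set.Ioc (0:ℝ) 1, c0 * s ^ (-δψ)) = c0 * (1 - δψ)⁻¹ := by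
      rw [integral_const_mul]
      congr 1
      rw [← intervalIntegral.integral_of_le zero_le_one,
        integral_rpow (Or.inl (by linarith))]
      rw [Real.one_rpow, Real.zero_rpow (by linarith)]
      rw [show -δψ + 1 = 1 - δψ by ring]
      field_simp
      norm_num
    calc (∫ s in Set.Ioc W 1, ψ (1 / s ^ 2)) ≤ c0 * (1 - δψ)⁻¹ := by
          rw [← step3]; exact le_trans step1 step2
      _ = a⁻¹ * (1 - δψ)⁻¹ * W ^ δψ * ψ (1 / W ^ 2) := by rw [hc0def]; ring
  -- bound on rho
  have rho_bound : ∀ t : ℝ, 0 < t → t ≤ 1 →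
      rhoWeight ψ V t ≤ K * V t ^ (1 + δψ) * ψ (1 / V t ^ 2) := by
    intro t ht0 ht1
    obtain ⟨hW0, hW1⟩ := hVrange t ht0 ht1
    set W := V t
    have hψW : 0 < ψ (1 / W ^ 2) := hψpos _ (hone W hW0 hW1)
    have h1 : W ^ 2 ≤ W ^ (1 + δψ) := by
      rw [show (W:ℝ) ^ 2 = W ^ ((2:ℝ)) by
        rw [show ((2:ℝ)) = ((2:ℕ):ℝ) by norm_num, Real.rpow_natCast]]
      exact Real.rpow_le_rpow_of_exponent_ge hW0 hW1 (by linarith)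
    have h2 : W * (a⁻¹ * (1 - δψ)⁻¹ * W ^ δψ * ψ (1 / W ^ 2)) =
        a⁻¹ * (1 - δψ)⁻¹ * (W ^ (1 + δψ) * ψ (1 / W ^ 2)) := by
      rw [Real.rpow_add hW0, Real.rpow_one]
      ring
    have h3 : W * (∫ s in Set.Ioc W 1, ψ (1 / s ^ 2)) ≤
        a⁻¹ * (1 - δψ)⁻¹ * (W ^ (1 + δψ) * ψ (1 / W ^ 2)) := by
      rw [← h2]
      exact mul_le_mul_of_nonneg_left (inner_bound W hW0 hW1) hW0.le
    have h4 : W ^ 2 * ψ (1 / W ^ 2) ≤ W ^ (1 + δψ) * ψ (1 / W ^ 2) :=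
      mul_le_mul_of_nonneg_right h1 hψW.le
    unfold rhoWeight
    rw [hKdef]
    calc V t ^ 2 * ψ (1 / V t ^ 2) + V t * ∫ s in Set.Ioc (V t) 1, ψ (1 / s ^ 2)
        ≤ W ^ (1 + δψ) * ψ (1 / W ^ 2) +
          a⁻¹ * (1 - δψ)⁻¹ * (W ^ (1 + δψ) * ψ (1 / W ^ 2)) := add_le_add h4 h3
      _ = (1 + a⁻¹ * (1 - δψ)⁻¹) * W ^ (1 + δψ) * ψ (1 / W ^ 2) := by ring
  -- nonnegativity of rho
  have rho_nonneg : ∀ t : ℝ, 0 < t → t ≤ 1 → 0 ≤ rhoWeight ψ V t := by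
    intro t ht0 ht1
    obtain ⟨hW0, hW1⟩ := hVrange t ht0 ht1
    have hI : 0 ≤ ∫ s in Set.Ioc (V t) 1, ψ (1 / s ^ 2) := by
      apply setIntegral_nonneg measurableSet_Ioc
      intro s hs
      exact (hψpos _ (hone s (lt_trans hW0 hs.1) hs.2)).le
    have hψW : 0 < ψ (1 / V t ^ 2) := hψpos _ (hone _ hW0 hW1)
    unfold rhoWeight
    positivity
  -- upper bound on V
  have Vbound : ∀ t : ℝ, 0 < t → t ≤ 1 → V t ^ δψ ≤ cK * t ^ e := by
    intro t ht0 ht1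
    obtain ⟨hW0, hW1⟩ := hVrange t ht0 ht1
    obtain ⟨hV10, hV11⟩ := hVrange 1 one_pos le_rfl
    have hsc := hVscale t 1 ht0 ht1 le_rfl
    have h1 : V t * (a₁ * (1 / t) ^ δV) ≤ V 1 := by
      rw [mul_comm]
      exact (le_div_iff₀ hW0).1 hsc
    have h2 : V t ≤ a₁⁻¹ * t ^ δV := by
      have hp : 0 < a₁ * (1 / t) ^ δV := by positivity
      have h3 : V t ≤ V 1 / (a₁ * (1 / t) ^ δV) := (le_div_iff₀ hp).2 h1
      calc V t ≤ V 1 / (a₁ * (1 / t) ^ δV) := h3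
        _ ≤ 1 / (a₁ * (1 / t) ^ δV) := by gcongr
        _ = a₁⁻¹ * t ^ δV := by
            rw [one_div t, Real.inv_rpow ht0.le]
            rw [eq_comm, mul_comm a₁⁻¹, eq_div_iff (by positivity)]
            field_simp
    calc V t ^ δψ ≤ (a₁⁻¹ * t ^ δV) ^ δψ :=
          Real.rpow_le_rpow hW0.le h2 hδψ.le
      _ = cK * t ^ e := by
          rw [Real.mul_rpow (by positivity) (by positivity), hcKdef, hedef,
            Real.inv_rpow ha₁.le, ← Real.rpow_mul ht0.le]
  refine ⟨C, hC1, fun δ hδ0 hδ1 => ?_⟩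
  obtain ⟨hVδ0, hVδ1⟩ := hVrange δ hδ0 hδ1
  have hψδ : 0 < ψ (1 / V δ ^ 2) := hψpos _ (hone _ hVδ0 hVδ1)
  have hden : 0 < δ * V δ * ψ (1 / V δ ^ 2) := by positivity
  set IA : ℝ := ∫ t in Set.Ioc (0:ℝ) δ, rhoWeight ψ V t * V t with hIAdef
  set IB : ℝ := ∫ t in Set.Ioc δ 1,
    rhoWeight ψ V t / (t * V t * ψ (1 / V t ^ 2)) with hIBdef
  have hGB : greenBound ψ V δ =
      (δ * V δ * ψ (1 / V δ ^ 2))⁻¹ * IA + V δ * (1 + IB) := rfl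
  -- Term A bound
  have hApt : ∀ t ∈ Set.Ioc (0:ℝ) δ,
      rhoWeight ψ V t * V t ≤ (K * cK * (V δ ^ 2 * ψ (1 / V δ ^ 2))) * t ^ e := by
    intro t ht
    obtain ⟨ht0, htδ⟩ := ht
    have ht1 : t ≤ 1 := le_trans htδ hδ1
    obtain ⟨hW0, hW1⟩ := hVrange t ht0 ht1
    have hψW : 0 < ψ (1 / V t ^ 2) := hψpos _ (hone _ hW0 hW1)
    have h1 : rhoWeight ψ V t * V t ≤ K * V t ^ δψ * (V t ^ 2 * ψ (1 / V t ^ 2)) := by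
      have := mul_le_mul_of_nonneg_right (rho_bound t ht0 ht1) hW0.le
      calc rhoWeight ψ V t * V t ≤ K * V t ^ (1 + δψ) * ψ (1 / V t ^ 2) * V t := this
        _ = K * V t ^ δψ * (V t ^ 2 * ψ (1 / V t ^ 2)) := by
            rw [Real.rpow_add hW0, Real.rpow_one]
            ring
    have h2 : V t ^ 2 * ψ (1 / V t ^ 2) ≤ V δ ^ 2 * ψ (1 / V δ ^ 2) :=
      hgmono ⟨hW0, hW1⟩ ⟨hVδ0, hVδ1⟩ (hVmono t δ ht0 htδ hδ1)
    have h3 : V t ^ δψ ≤ cK * t ^ e := Vbound t ht0 ht1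
    calc rhoWeight ψ V t * V t ≤ K * V t ^ δψ * (V t ^ 2 * ψ (1 / V t ^ 2)) := h1
      _ ≤ K * (cK * t ^ e) * (V δ ^ 2 * ψ (1 / V δ ^ 2)) := by
          apply mul_le_mul _ h2 (by positivity) (by positivity)
          exact mul_le_mul_of_nonneg_left h3 hK.le
      _ = (K * cK * (V δ ^ 2 * ψ (1 / V δ ^ 2))) * t ^ e := by ring
  have hintA : IntegrableOn (fun t : ℝ =>
      (K * cK * (V δ ^ 2 * ψ (1 / V δ ^ 2))) * t ^ e) (Set.Ioc 0 δ) :=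
    ((intervalIntegral.intervalIntegrable_rpow' (by linarith)).1).const_mul _
  have hAint : (∫ t in Set.Ioc (0:ℝ) δ, rhoWeight ψ V t * V t) ≤
      (K * cK * (V δ ^ 2 * ψ (1 / V δ ^ 2))) * δ := by
    have step1 : (∫ t in Set.Ioc (0:ℝ) δ, rhoWeight ψ V t * V t) ≤
        ∫ t in Set.Ioc (0:ℝ) δ, (K * cK * (V δ ^ 2 * ψ (1 / V δ ^ 2))) * t ^ e := by
      apply integral_mono_of_nonneg _ hintA
      · filter_upwards [ae_restrict_mem measurableSet_Ioc] with t ht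
        exact hApt t ht
      · filter_upwards [ae_restrict_mem measurableSet_Ioc] with t ht
        exact mul_nonneg (rho_nonneg t ht.1 (le_trans ht.2 hδ1))
          (hVrange t ht.1 (le_trans ht.2 hδ1)).1.le
    have step2 : (∫ t in Set.Ioc (0:ℝ) δ, t ^ e) ≤ δ := by
      rw [← intervalIntegral.integral_of_le hδ0.le,
        integral_rpow (Or.inl (by linarith))]
      rw [Real.zero_rpow (by linarith)]
      have h1 : δ ^ (e + 1) ≤ δ := by
        calc δ ^ (e + 1) ≤ δ ^ (1:ℝ) :=
              Real.rpow_le_rpow_of_exponent_ge hδ0 hδ1 (by linarith)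
          _ = δ := Real.rpow_one δ
      have h2 : (1:ℝ) ≤ e + 1 := by linarith
      calc (δ ^ (e + 1) - 0) / (e + 1) ≤ δ ^ (e + 1) / 1 := by
            apply div_le_div₀ (by positivity) (by linarith) one_pos h2
        _ = δ ^ (e + 1) := div_one _
        _ ≤ δ := h1
    calc (∫ t in Set.Ioc (0:ℝ) δ, rhoWeight ψ V t * V t)
        ≤ ∫ t in Set.Ioc (0:ℝ) δ, (K * cK * (V δ ^ 2 * ψ (1 / V δ ^ 2))) * t ^ e :=
          step1
      _ = (K * cK * (V δ ^ 2 * ψ (1 / V δ ^ 2))) * ∫ t in Set.Ioc (0:ℝ) δ, t ^ e :=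
          integral_const_mul _ _
      _ ≤ (K * cK * (V δ ^ 2 * ψ (1 / V δ ^ 2))) * δ :=
          mul_le_mul_of_nonneg_left step2 (by positivity)
  have hA : (δ * V δ * ψ (1 / V δ ^ 2))⁻¹ *
      (∫ t in Set.Ioc (0:ℝ) δ, rhoWeight ψ V t * V t) ≤ K * cK * V δ := by
    have := mul_le_mul_of_nonneg_left hAint (inv_nonneg.2 hden.le)
    calc (δ * V δ * ψ (1 / V δ ^ 2))⁻¹ *
        (∫ t in Set.Ioc (0:ℝ) δ, rhoWeight ψ V t * V t)
        ≤ (δ * V δ * ψ (1 / V δ ^ 2))⁻¹ *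
          ((K * cK * (V δ ^ 2 * ψ (1 / V δ ^ 2))) * δ) := this
      _ = K * cK * V δ := by field_simp
  -- Term B bound
  have hBpt : ∀ t ∈ Set.Ioc δ 1,
      rhoWeight ψ V t / (t * V t * ψ (1 / V t ^ 2)) ≤ (K * cK) * t ^ (e - 1) := by
    intro t ht
    obtain ⟨hδt, ht1⟩ := ht
    have ht0 : 0 < t := lt_trans hδ0 hδt
    obtain ⟨hW0, hW1⟩ := hVrange t ht0 ht1
    have hψW : 0 < ψ (1 / V t ^ 2) := hψpos _ (hone _ hW0 hW1)
    have hdenT : 0 < t * V t * ψ (1 / V t ^ 2) := by positivity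
    have h1 : rhoWeight ψ V t / (t * V t * ψ (1 / V t ^ 2)) ≤
        K * V t ^ δψ / t := by
      rw [div_le_div_iff₀ hdenT ht0]
      calc rhoWeight ψ V t * t ≤ (K * V t ^ (1 + δψ) * ψ (1 / V t ^ 2)) * t :=
            mul_le_mul_of_nonneg_right (rho_bound t ht0 ht1) ht0.le
        _ = K * V t ^ δψ * (t * V t * ψ (1 / V t ^ 2)) := by
            rw [Real.rpow_add hW0, Real.rpow_one]
            ring
    have h2 : K * V t ^ δψ / t ≤ (K * cK) * t ^ (e - 1) := by
      have h3 : K * V t ^ δψ ≤ K * (cK * t ^ e) :=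
        mul_le_mul_of_nonneg_left (Vbound t ht0 ht1) hK.le
      calc K * V t ^ δψ / t ≤ K * (cK * t ^ e) / t := by
            gcongr
        _ = (K * cK) * t ^ (e - 1) := by
            rw [Real.rpow_sub ht0, Real.rpow_one]
            ring
    exact le_trans h1 h2
  have hintB1 : IntegrableOn (fun t : ℝ => (K * cK) * t ^ (e - 1)) (Set.Ioc 0 1) :=
    ((intervalIntegral.intervalIntegrable_rpow' (by linarith)).1).const_mul _
  have hintB : IntegrableOn (fun t : ℝ => (K * cK) * t ^ (e - 1)) (Set.Ioc δ 1) :=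
    hintB1.mono_set (Set.Ioc_subset_Ioc_left hδ0.le)
  have hB : (∫ t in Set.Ioc δ 1, rhoWeight ψ V t / (t * V t * ψ (1 / V t ^ 2))) ≤
      K * cK * e⁻¹ := by
    have step1 : (∫ t in Set.Ioc δ 1,
        rhoWeight ψ V t / (t * V t * ψ (1 / V t ^ 2))) ≤
        ∫ t in Set.Ioc δ 1, (K * cK) * t ^ (e - 1) := by
      apply integral_mono_of_nonneg _ hintB
      · filter_upwards [ae_restrict_mem measurableSet_Ioc] with t ht
        exact hBpt t ht
      · filter_upwards [ae_restrict_mem measurableSet_Ioc] with t ht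
        have ht0 : 0 < t := lt_trans hδ0 ht.1
        obtain ⟨hW0, hW1⟩ := hVrange t ht0 ht.2
        have hψW : 0 < ψ (1 / V t ^ 2) := hψpos _ (hone _ hW0 hW1)
        exact div_nonneg (rho_nonneg t ht0 ht.2) (by positivity)
    have step2 : (∫ t in Set.Ioc δ 1, (K * cK) * t ^ (e - 1)) ≤
        ∫ t in Set.Ioc (0:ℝ) 1, (K * cK) * t ^ (e - 1) := by
      apply setIntegral_mono_set hintB1 _
        ((Set.Ioc_subset_Ioc_left hδ0.le).eventuallyLE)
      filter_upwards [ae_restrict_mem measurableSet_Ioc] with t ht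
      have : 0 ≤ t ^ (e - 1) := Real.rpow_nonneg ht.1.le _
      positivity
    have step3 : (∫ t in Set.Ioc (0:ℝ) 1, (K * cK) * t ^ (e - 1)) =
        K * cK * e⁻¹ := by
      rw [integral_const_mul]
      congr 1
      rw [← intervalIntegral.integral_of_le zero_le_one,
        integral_rpow (Or.inl (by linarith))]
      rw [Real.one_rpow, Real.zero_rpow (by linarith)]
      rw [show e - 1 + 1 = e by ring]
      field_simp
      norm_num
    rw [← step3]
    exact le_trans step1 step2
  -- nonnegativity of terms
  have hAnn : 0 ≤ (δ * V δ * ψ (1 / V δ ^ 2))⁻¹ *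
      (∫ t in Set.Ioc (0:ℝ) δ, rhoWeight ψ V t * V t) := by
    apply mul_nonneg (inv_nonneg.2 hden.le)
    apply setIntegral_nonneg measurableSet_Ioc
    intro t ht
    exact mul_nonneg (rho_nonneg t ht.1 (le_trans ht.2 hδ1))
      (hVrange t ht.1 (le_trans ht.2 hδ1)).1.le
  have hBnn : 0 ≤ ∫ t in Set.Ioc δ 1,
      rhoWeight ψ V t / (t * V t * ψ (1 / V t ^ 2)) := by
    apply setIntegral_nonneg measurableSet_Ioc
    intro t ht
    have ht0 : 0 < t := lt_trans hδ0 ht.1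
    obtain ⟨hW0, hW1⟩ := hVrange t ht0 ht.2
    have hψW : 0 < ψ (1 / V t ^ 2) := hψpos _ (hone _ hW0 hW1)
    exact div_nonneg (rho_nonneg t ht0 ht.2) (by positivity)
  rw [← hIAdef] at hA hAnn
  rw [← hIBdef] at hB hBnn
  clear_value IA IB
  constructor
  · -- lower bound
    have h1 : C⁻¹ * V δ ≤ V δ := by
      have h2 : C⁻¹ ≤ 1 := inv_le_one_of_one_le₀ hC1
      calc C⁻¹ * V δ ≤ 1 * V δ := mul_le_mul_of_nonneg_right h2 hVδ0.le
        _ = V δ := one_mul _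
    have h2 : V δ ≤ greenBound ψ V δ := by
      rw [hGB]
      have h3 : V δ ≤ V δ * (1 + IB) := le_mul_of_one_le_right hVδ0.le (by linarith)
      linarith
    linarith
  · -- upper bound
    rw [hGB]
    have h1 : V δ * (1 + IB) ≤ V δ * (1 + K * cK * e⁻¹) :=
      mul_le_mul_of_nonneg_left (add_le_add le_rfl hB) hVδ0.le
    calc (δ * V δ * ψ (1 / V δ ^ 2))⁻¹ * IA + V δ * (1 + IB)
        ≤ K * cK * V δ + V δ * (1 + K * cK * e⁻¹) := add_le_add hA h1
      _ = C * V δ := by rw [hCdef]; ring
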